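/- Let L be a skew free (p,q)-leaper (0 < p < q, gcd(p,q)=1, p+q odd), and let r be the even one of p, q. If r ≡ 2 (mod 4), the set S of cells (x,y) with ⌊x/2⌋ even, and if r ≡ 0 (mod 4), the set S of cells (x,y) with ⌊x/2⌋ + y even, each induces in the leaper graph on ℤ² a subgraph in which every vertex has degree exactly 2, with no finite cycles, and S has density 1/2. -/

import Mathlib

open SimpleGraph

abbrev Cell : Type := ℤ × ℤ

def sqBoard (n : ℕ) : Set Cell :=
  {a | 0 ≤ a.1 ∧ a.1 ≤ (n : ℤ) - 1 ∧ 0 ≤ a.2 ∧ a.2 ≤ (n : ℤ) - 1}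

/-- The king graph on the standard `n × n` board. -/
def kingGraph (n : ℕ) : SimpleGraph Cell where
  Adj a b := a ≠ b ∧ a ∈ sqBoard n ∧ b ∈ sqBoard n ∧ |a.1 - b.1| ≤ 1 ∧ |a.2 - b.2| ≤ 1
  symm := ⟨by
    rintro a b ⟨h1, h2, h3, h4, h5⟩
    exact ⟨h1.symm, h3, h2, by rwa [abs_sub_comm], by rwa [abs_sub_comm]⟩⟩
  loopless := ⟨by rintro a ⟨h, -⟩; exact h rfl⟩

def board (m n : ℕ) : Set Cell :=
  {a | 0 ≤ a.1 ∧ a.1 ≤ (n : ℤ) - 1 ∧ 0 ≤ a.2 ∧ a.2 ≤ (m : ℤ) - 1}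

/-- The grid graph on the standard `m × n` board (m rows, n columns). -/
def gridGraph (m n : ℕ) : SimpleGraph Cell where
  Adj a b := a ∈ board m n ∧ b ∈ board m n ∧ |a.1 - b.1| + |a.2 - b.2| = 1
  symm := ⟨by
    rintro a b ⟨h1, h2, h3⟩
    refine ⟨h2, h1, ?_⟩
    rw [abs_sub_comm b.1 a.1, abs_sub_comm b.2 a.2]
    exact h3⟩
  loopless := ⟨by rintro a ⟨-, -, h⟩; simp at h⟩

/-- A snake path: a path which is an induced subgraph. -/
def IsSnake {V : Type*} (G : SimpleGraph V) {a b : V} (p : G.Walk a b) : Prop :=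
  p.IsPath ∧ ∀ u ∈ p.support, ∀ v ∈ p.support, G.Adj u v → s(u, v) ∈ p.edges

/-- The walk `p` makes a turn at `c` : it traverses a horizontal and a vertical edge at `c`. -/
def TurnsAt {G : SimpleGraph Cell} {a b : Cell} (p : G.Walk a b) (c : Cell) : Prop :=
  ∃ u v : Cell, u ≠ v ∧ s(u, c) ∈ p.edges ∧ s(c, v) ∈ p.edges ∧
    ((u.2 = c.2 ∧ v.1 = c.1) ∨ (u.1 = c.1 ∧ v.2 = c.2))

noncomputable def turnCount {G : SimpleGraph Cell} {a b : Cell} (p : G.Walk a b) : ℕ :=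
  Set.ncard {c : Cell | TurnsAt p c}

/-- The walk `p` goes straight through `c`. -/
def GoesStraight {G : SimpleGraph Cell} {a b : Cell} (p : G.Walk a b) (c : Cell) : Prop :=
  ∃ u v : Cell, u ≠ v ∧ s(u, c) ∈ p.edges ∧ s(c, v) ∈ p.edges ∧
    ((u.2 = c.2 ∧ v.2 = c.2) ∨ (u.1 = c.1 ∧ v.1 = c.1))

/-- `p` is a Hamiltonian path on the vertex set `S`. -/
def IsHamOn {V : Type*} {G : SimpleGraph V} (S : Set V) {a b : V} (p : G.Walk a b) : Prop :=
  p.IsPath ∧ ∀ v, v ∈ S ↔ v ∈ p.support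

/-- The 4-cycle `a'—a''—b'—b''—a'` of the grid graph is free relative to `p`. -/
def FreeCycle {k : ℕ} {a b : Cell} (p : (gridGraph k k).Walk a b)
    (a' a'' b' b'' : Cell) : Prop :=
  (gridGraph k k).Adj a' a'' ∧ (gridGraph k k).Adj a'' b' ∧
  (gridGraph k k).Adj b' b'' ∧ (gridGraph k k).Adj b'' a' ∧
  s(a', a'') ∈ p.edges ∧ s(a'', b') ∉ p.edges ∧
  s(b', b'') ∉ p.edges ∧ s(b'', a') ∉ p.edges ∧
  GoesStraight p a' ∧ GoesStraight p a'' ∧ TurnsAt p b' ∧ TurnsAt p b''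

/-- The (p,q)-leaper graph on ℤ². -/
def leaperGraph (p q : ℕ) : SimpleGraph Cell where
  Adj a b := a ≠ b ∧
    ((|a.1 - b.1| = p ∧ |a.2 - b.2| = q) ∨ (|a.1 - b.1| = q ∧ |a.2 - b.2| = p))
  symm := ⟨by
    rintro a b ⟨h1, h2⟩
    refine ⟨h1.symm, ?_⟩
    rw [abs_sub_comm b.1 a.1, abs_sub_comm b.2 a.2]
    exact h2⟩
  loopless := ⟨by rintro a ⟨h, -⟩; exact h rfl⟩

lemma leaper_adj' (p q : ℕ) (a b : Cell) : (leaperGraph p q).Adj a b ↔ a ≠ b ∧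
    ((|a.1 - b.1| = p ∧ |a.2 - b.2| = q) ∨ (|a.1 - b.1| = q ∧ |a.2 - b.2| = p)) := Iff.rfl

lemma cycle_two_nbrs' {V : Type*} {G : SimpleGraph V} {v : V} {w : G.Walk v v}
    (hw : w.IsCycle) :
    ∃ b₁ b₂ : V, b₁ ≠ b₂ ∧ G.Adj v b₁ ∧ G.Adj v b₂ ∧ b₁ ∈ w.support ∧ b₂ ∈ w.support := by
  obtain ⟨b₁, h, q, rfl⟩ := (SimpleGraph.Walk.not_nil_iff).mp hw.not_nil
  rw [SimpleGraph.Walk.cons_isCycle_iff] at hw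
  obtain ⟨hq, hne⟩ := hw
  obtain ⟨b₂, h', q', hq'⟩ := SimpleGraph.Walk.exists_eq_cons_of_ne h.ne q.reverse
  have he2 : s(v, b₂) ∈ q.edges := by
    have h2 : s(v, b₂) ∈ q.reverse.edges := by rw [hq']; simp
    rwa [SimpleGraph.Walk.edges_reverse, List.mem_reverse] at h2
  refine ⟨b₁, b₂, ?_, h, h', ?_, ?_⟩
  · rintro rfl; exact hne he2
  · simp [SimpleGraph.Walk.support_cons, q.start_mem_support]
  · simp [SimpleGraph.Walk.support_cons, q.snd_mem_support_of_mem_edges he2]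

set_option maxHeartbeats 2000000 in
/-- explicit doubly periodic pseudosnake of density 1/2 for a skew free
leaper, with all degrees exactly 2 and no finite cycles. -/
theorem leaper_half_pseudosnake (p q r : ℕ) (hp : 0 < p) (hpq : p < q)
    (hg : Nat.gcd p q = 1) (hodd : Odd (p + q)) (hr : r = p ∨ r = q) (hre : Even r) :
    let S : Set Cell := if r % 4 = 2 then {a | Even (Int.fdiv a.1 2)}
      else {a | Even (Int.fdiv a.1 2 + a.2)}
    (∀ a ∈ S, Set.ncard {b : Cell | b ∈ S ∧ (leaperGraph p q).Adj a b} = 2) ∧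
    (¬ ∃ (a : Cell) (w : (leaperGraph p q).Walk a a), w.IsCycle ∧
      ∀ v ∈ w.support, v ∈ S) ∧
    (∀ x y : ℤ,
      Set.ncard {a : Cell | a ∈ S ∧ x ≤ a.1 ∧ a.1 < x + 4 ∧ y ≤ a.2 ∧ a.2 < y + 2} = 4) := by
  intro S
  have hS : S = (if r % 4 = 2 then {a : Cell | Even (Int.fdiv a.1 2)}
      else {a : Cell | Even (Int.fdiv a.1 2 + a.2)}) := rfl
  have hodd' : (p + q) % 2 = 1 := Nat.odd_iff.mp hodd
  have hre' : r % 2 = 0 := Nat.even_iff.mp hre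
  have hp0 : (0:ℤ) ≤ (p:ℤ) := by positivity
  have hq0 : (0:ℤ) ≤ (q:ℤ) := by positivity
  have hr0 : 0 < (r:ℤ) := by rcases hr with h | h <;> omega
  have hr2 : (r:ℤ) % 2 = 0 := by omega
  obtain ⟨X, hX2, hX0, hRX⟩ : ∃ X : ℤ, X % 2 = 1 ∧ 0 < X ∧
      (((r:ℤ) = (p:ℤ) ∧ X = (q:ℤ)) ∨ ((r:ℤ) = (q:ℤ) ∧ X = (p:ℤ))) := by
    rcases hr with h | h
    · subst h; exact ⟨(q:ℤ), by omega, by omega, Or.inl ⟨rfl, rfl⟩⟩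
    · subst h; exact ⟨(p:ℤ), by omega, by omega, Or.inr ⟨rfl, rfl⟩⟩
  have hfd : ∀ z : ℤ, Int.fdiv z 2 = z / 2 := fun z => Int.fdiv_eq_ediv_of_nonneg z (by norm_num)
  have key : ∀ a ∈ S, ∃ e : ℤ,
      {b : Cell | b ∈ S ∧ (leaperGraph p q).Adj a b}
        = {((a.1 + e, a.2 + (r:ℤ)) : Cell), (a.1 + e, a.2 - (r:ℤ))} := by
    intro a ha
    by_cases hc : r % 4 = 2
    · have hc' : (r:ℤ) % 4 = 2 := by omega
      rw [hS, if_pos hc] at ha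
      simp only [Set.mem_setOf_eq, Int.even_iff, hfd] at ha
      obtain ⟨e, he, hgood, hbad⟩ : ∃ e : ℤ, (e = X ∨ e = -X) ∧
          (a.1 + e) / 2 % 2 = 0 ∧ ¬((a.1 - e) / 2 % 2 = 0) := by
        by_cases hg : (a.1 + X) / 2 % 2 = 0
        · exact ⟨X, Or.inl rfl, hg, by omega⟩
        · exact ⟨-X, Or.inr rfl, by omega, by omega⟩
      refine ⟨e, ?_⟩
      ext ⟨b1, b2⟩
      simp only [hS, if_pos hc, Set.mem_setOf_eq, Set.mem_insert_iff,
        Set.mem_singleton_iff, leaper_adj', ne_eq, Prod.ext_iff, Prod.mk.injEq,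
        Int.even_iff, hfd, abs_eq hp0, abs_eq hq0]
      rcases hRX with ⟨hR, rfl⟩ | ⟨hR, rfl⟩ <;> rcases he with rfl | rfl <;> omega
    · have hc' : (r:ℤ) % 4 = 0 := by omega
      rw [hS, if_neg hc] at ha
      simp only [Set.mem_setOf_eq, Int.even_iff, hfd] at ha
      obtain ⟨e, he, hgood, hbad⟩ : ∃ e : ℤ, (e = X ∨ e = -X) ∧
          (a.1 + e) / 2 % 2 = a.1 / 2 % 2 ∧ ¬((a.1 - e) / 2 % 2 = a.1 / 2 % 2) := by
        by_cases hg : (a.1 + X) / 2 % 2 = a.1 / 2 % 2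
        · exact ⟨X, Or.inl rfl, hg, by omega⟩
        · exact ⟨-X, Or.inr rfl, by omega, by omega⟩
      refine ⟨e, ?_⟩
      ext ⟨b1, b2⟩
      simp only [hS, if_neg hc, Set.mem_setOf_eq, Set.mem_insert_iff,
        Set.mem_singleton_iff, leaper_adj', ne_eq, Prod.ext_iff, Prod.mk.injEq,
        Int.even_iff, hfd, abs_eq hp0, abs_eq hq0]
      rcases hRX with ⟨hR, rfl⟩ | ⟨hR, rfl⟩ <;> rcases he with rfl | rfl <;> omega
  refine ⟨?_, ?_, ?_⟩
  · intro a ha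
    obtain ⟨e, hset⟩ := key a ha
    rw [hset]
    refine Set.ncard_pair ?_
    simp only [ne_eq, Prod.mk.injEq]
    omega
  · rintro ⟨a, w, hw, hsupp⟩
    have hane : a ∈ w.support.toFinset := List.mem_toFinset.mpr w.start_mem_support
    obtain ⟨v, hvmem, hvmax⟩ := Finset.exists_max_image w.support.toFinset
      (fun c => c.2) ⟨a, hane⟩
    rw [List.mem_toFinset] at hvmem
    obtain ⟨b₁, b₂, hbne, hadj1, hadj2, hb1, hb2⟩ := cycle_two_nbrs' (hw.rotate hvmem)
    have hrot : ∀ u, u ∈ (w.rotate v hvmem).support → u ∈ w.support := by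
      intro u hu
      rcases (SimpleGraph.Walk.mem_support_iff _).mp hu with rfl | hu'
      · exact hvmem
      · exact List.mem_of_mem_tail
          (((SimpleGraph.Walk.support_rotate w v hvmem).mem_iff).mp hu')
    obtain ⟨e, hset⟩ := key v (hsupp v hvmem)
    have h1 : b₁ ∈ {b : Cell | b ∈ S ∧ (leaperGraph p q).Adj v b} :=
      ⟨hsupp _ (hrot _ hb1), hadj1⟩
    have h2 : b₂ ∈ {b : Cell | b ∈ S ∧ (leaperGraph p q).Adj v b} :=
      ⟨hsupp _ (hrot _ hb2), hadj2⟩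
    rw [hset] at h1 h2
    have m1 : b₁.2 ≤ v.2 := hvmax _ (List.mem_toFinset.mpr (hrot _ hb1))
    have m2 : b₂.2 ≤ v.2 := hvmax _ (List.mem_toFinset.mpr (hrot _ hb2))
    apply hbne
    simp only [Set.mem_insert_iff, Set.mem_singleton_iff] at h1 h2
    rcases h1 with rfl | rfl <;> rcases h2 with rfl | rfl <;>
      simp only [Prod.snd] at m1 m2 <;> first | rfl | (exfalso; omega)
  · intro x y
    by_cases hc : r % 4 = 2
    · have hclaim : {a : Cell | a ∈ S ∧ x ≤ a.1 ∧ a.1 < x + 4 ∧ y ≤ a.2 ∧ a.2 < y + 2}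
          = {((x + (0 - x) % 4, y) : Cell), (x + (0 - x) % 4, y + 1),
             (x + (1 - x) % 4, y), (x + (1 - x) % 4, y + 1)} := by
        ext ⟨u, v⟩
        simp only [hS, if_pos hc, Set.mem_setOf_eq, Set.mem_insert_iff,
          Set.mem_singleton_iff, Prod.mk.injEq, Int.even_iff, hfd]
        omega
      rw [hclaim,
        Set.ncard_insert_of_notMem (by
          simp only [Set.mem_insert_iff, Set.mem_singleton_iff, Prod.mk.injEq]; omega)
          (((Set.finite_singleton _).insert _).insert _),
        Set.ncard_insert_of_notMem (by
          simp only [Set.mem_insert_iff, Set.mem_singleton_iff, Prod.mk.injEq]; omega)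
          ((Set.finite_singleton _).insert _),
        Set.ncard_insert_of_notMem (by
          simp only [Set.mem_singleton_iff, Prod.mk.injEq]; omega)
          (Set.finite_singleton _),
        Set.ncard_singleton]
    · have hclaim : {a : Cell | a ∈ S ∧ x ≤ a.1 ∧ a.1 < x + 4 ∧ y ≤ a.2 ∧ a.2 < y + 2}
          = {((x, y + (x / 2 + y) % 2) : Cell),
             (x + 1, y + ((x + 1) / 2 + y) % 2),
             (x + 2, y + ((x + 2) / 2 + y) % 2),
             (x + 3, y + ((x + 3) / 2 + y) % 2)} := by
        ext ⟨u, v⟩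
        simp only [hS, if_neg hc, Set.mem_setOf_eq, Set.mem_insert_iff,
          Set.mem_singleton_iff, Prod.mk.injEq, Int.even_iff, hfd]
        omega
      rw [hclaim,
        Set.ncard_insert_of_notMem (by
          simp only [Set.mem_insert_iff, Set.mem_singleton_iff, Prod.mk.injEq]; omega)
          (((Set.finite_singleton _).insert _).insert _),
        Set.ncard_insert_of_notMem (by
          simp only [Set.mem_insert_iff, Set.mem_singleton_iff, Prod.mk.injEq]; omega)
          ((Set.finite_singleton _).insert _),
        Set.ncard_insert_of_notMem (by
          simp only [Set.mem_singleton_iff, Prod.mk.injEq]; omega)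
          (Set.finite_singleton _),
        Set.ncard_singleton]
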